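/- For every integer n ≥ 1 and every x ∈ ℂ with x ∉ {0, 1, 2, 4, …, 2n}, the partial fraction decomposition g_n(x)/(x(x−1)) = (−1)^n·[ −(1/A_{n0})·1/(x−1) + Σ_{m=0}^n (−1)^m·A_{nm}/(x−2m) ] holds. -/

import Mathlib

open Complex Finset

/-- The coefficient `A_{nm} := Γ(n+m+1/2) / ((2m-1)·(n-m)!·m!·Γ(m+1/2))`. -/
noncomputable def Acoef (n m : ℕ) : ℝ :=
  Real.Gamma ((n : ℝ) + m + 1 / 2) /
    ((2 * (m : ℝ) - 1) * (Nat.factorial (n - m) : ℝ) * (Nat.factorial m : ℝ) *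
      Real.Gamma ((m : ℝ) + 1 / 2))

/-- `g_n(x) := ∏_{m=1}^n (x+2m-1)/(x-2m)`. -/
noncomputable def gn (n : ℕ) (x : ℂ) : ℂ :=
  ∏ m ∈ Finset.Icc 1 n, (x + 2 * (m : ℂ) - 1) / (x - 2 * (m : ℂ))

open Polynomial

/-! ### Auxiliary real lemmas -/

lemma gamma_ratio (m : ℕ) : ∀ n : ℕ, Real.Gamma ((m : ℝ) + n + 1/2)
    = Real.Gamma ((m : ℝ) + 1/2) * ∏ j ∈ range n, ((m : ℝ) + j + 1/2) := by
  intro n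
  induction n with
  | zero => simp
  | succ k ih =>
      have h1 : ((m : ℝ) + (k+1 : ℕ) + 1/2) = ((m : ℝ) + k + 1/2) + 1 := by push_cast; ring
      rw [h1, Real.Gamma_add_one (by positivity), ih, prod_range_succ]
      ring

lemma prod_half_pos (m n : ℕ) : 0 < ∏ j ∈ range n, ((m : ℝ) + j + 1/2) := by
  apply Finset.prod_pos; intro j _; positivity

lemma two_m_sub_one_ne (m : ℕ) : (2 * (m : ℝ) - 1) ≠ 0 := by
  intro h
  have h2 : ((2 * m : ℕ) : ℝ) = ((1 : ℕ) : ℝ) := by push_cast; linarith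
  have := Nat.cast_injective h2
  omega

lemma Acoef_mul (n m : ℕ) :
    Acoef n m * ((2 * (m : ℝ) - 1) * (Nat.factorial (n - m)) * (Nat.factorial m))
      = ∏ j ∈ range n, ((m : ℝ) + j + 1/2) := by
  have hg : Real.Gamma ((n : ℝ) + m + 1/2)
      = Real.Gamma ((m : ℝ) + 1/2) * ∏ j ∈ range n, ((m : ℝ) + j + 1/2) := by
    rw [show ((n : ℝ) + m + 1/2) = ((m : ℝ) + n + 1/2) by ring]; exact gamma_ratio m n
  have hGpos : 0 < Real.Gamma ((m : ℝ) + 1/2) := Real.Gamma_pos_of_pos (by positivity)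
  rw [Acoef, hg]
  have h1 := two_m_sub_one_ne m
  have h2 : (Nat.factorial (n-m) : ℝ) ≠ 0 := Nat.cast_ne_zero.mpr (Nat.factorial_ne_zero _)
  have h3 : (Nat.factorial m : ℝ) ≠ 0 := Nat.cast_ne_zero.mpr (Nat.factorial_ne_zero _)
  field_simp
  have h1' : (-1 + (m:ℝ)*2) ≠ 0 := by contrapose! h1; linarith
  linear_combination mul_inv_cancel₀ h1'

lemma Acoef_zero (n : ℕ) :
    Acoef n 0 = -(∏ j ∈ range n, ((j : ℝ) + 1/2)) / (Nat.factorial n) := by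
  have h := Acoef_mul n 0
  simp only [Nat.cast_zero, mul_zero, zero_sub, Nat.sub_zero, Nat.factorial_zero,
    Nat.cast_one, mul_one, zero_add] at h
  have hf : (Nat.factorial n : ℝ) ≠ 0 := Nat.cast_ne_zero.mpr (Nat.factorial_ne_zero _)
  rw [eq_div_iff hf]
  linear_combination -h

/-! ### Complex product computations -/

lemma prod_fall (m : ℕ) : ∏ k ∈ range m, ((m : ℂ) - k) = Nat.factorial m := by
  have h1 : ∏ k ∈ range m, ((m : ℂ) - k) = ∏ k ∈ range m, ((m - k : ℕ) : ℂ) := by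
    refine Finset.prod_congr rfl (fun k hk => ?_)
    rw [Nat.cast_sub (le_of_lt (mem_range.mp hk))]
  rw [h1, ← Nat.cast_prod]
  congr 1
  calc ∏ i ∈ range m, (m - i) = ∏ i ∈ range m, (m - 1 - i + 1) :=
        Finset.prod_congr rfl (fun k hk => by have := mem_range.mp hk; omega)
    _ = ∏ i ∈ range m, (i + 1) := Finset.prod_range_reflect (fun j => j + 1) m
    _ = Nat.factorial m := Finset.prod_range_add_one_eq_factorial m

lemma erase_split (n m : ℕ) (h : m ≤ n) :
    (range (n+1)).erase m = range m ∪ Finset.Ico (m+1) (n+1) := by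
  ext k
  simp only [mem_erase, mem_range, mem_union, Finset.mem_Ico]
  omega

lemma prod_erase_eval (n m : ℕ) (h : m ≤ n) :
    ∏ k ∈ (range (n+1)).erase m, (2 * (m : ℂ) - 2 * k)
      = 2 ^ m * Nat.factorial m * (-2) ^ (n - m) * Nat.factorial (n - m) := by
  rw [erase_split n m h, Finset.prod_union (by
    simp only [Finset.disjoint_left, mem_range, Finset.mem_Ico]; omega)]
  have hA : ∏ k ∈ range m, (2 * (m : ℂ) - 2 * k) = 2 ^ m * Nat.factorial m := by
    calc ∏ k ∈ range m, (2 * (m : ℂ) - 2 * k) = ∏ k ∈ range m, 2 * ((m : ℂ) - k) :=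
          Finset.prod_congr rfl (fun k _ => by ring)
      _ = 2 ^ m * Nat.factorial m := by
          rw [Finset.prod_mul_distrib, Finset.prod_const, card_range, prod_fall]
  have hB : ∏ k ∈ Finset.Ico (m+1) (n+1), (2 * (m : ℂ) - 2 * k)
      = (-2) ^ (n - m) * Nat.factorial (n - m) := by
    rw [Finset.prod_Ico_eq_prod_range]
    have heq : n + 1 - (m + 1) = n - m := by omega
    rw [heq]
    calc ∏ k ∈ range (n - m), (2 * (m : ℂ) - 2 * (((m + 1 + k : ℕ)) : ℂ))
        = ∏ k ∈ range (n - m), (-2) * ((k : ℂ) + 1) :=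
          Finset.prod_congr rfl (fun k _ => by push_cast; ring)
      _ = (-2) ^ (n - m) * Nat.factorial (n - m) := by
          rw [Finset.prod_mul_distrib, Finset.prod_const, card_range]
          congr 1
          rw [← Finset.prod_range_add_one_eq_factorial (n - m)]
          push_cast; rfl
  rw [hA, hB]; ring

lemma prod_one_sub (n : ℕ) :
    ∏ k ∈ range (n+1), (1 - 2 * (k : ℂ))
      = (-1) ^ n * 2 ^ n * ∏ j ∈ range n, ((j : ℂ) + 1/2) := by
  rw [Finset.prod_range_succ']
  simp only [Nat.cast_zero, mul_zero, sub_zero, mul_one]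
  calc (∏ k ∈ range n, (1 - 2 * ((k+1 : ℕ) : ℂ)))
      = ∏ k ∈ range n, (-2) * ((k : ℂ) + 1/2) :=
        Finset.prod_congr rfl (fun k _ => by push_cast; ring)
    _ = (-1) ^ n * 2 ^ n * ∏ j ∈ range n, ((j : ℂ) + 1/2) := by
        rw [Finset.prod_mul_distrib, Finset.prod_const, card_range, neg_pow]

/-! ### The polynomials -/

noncomputable def Pp (n : ℕ) : Polynomial ℂ :=
  ∏ m ∈ Finset.Icc 1 n, (Polynomial.X + Polynomial.C (2 * (m : ℂ) - 1))

noncomputable def Qq (n : ℕ) : Polynomial ℂ :=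
  Polynomial.C ((-1 : ℂ) ^ n) *
    (Polynomial.C (-(1 / ((Acoef n 0 : ℝ) : ℂ))) *
        ∏ k ∈ range (n+1), (Polynomial.X - Polynomial.C (2 * (k : ℂ))) +
      ∑ m ∈ range (n+1), Polynomial.C ((-1 : ℂ) ^ m * ((Acoef n m : ℝ) : ℂ)) *
        ((Polynomial.X - 1) *
          ∏ k ∈ (range (n+1)).erase m, (Polynomial.X - Polynomial.C (2 * (k : ℂ))))) 

lemma evalP (n : ℕ) (z : ℂ) :
    (Pp n).eval z = ∏ m ∈ Finset.Icc 1 n, (z + 2 * (m : ℂ) - 1) := by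
  simp only [Pp, eval_prod, eval_add, eval_X, eval_C]
  exact Finset.prod_congr rfl (fun m _ => by ring)

lemma evalQ (n : ℕ) (z : ℂ) : (Qq n).eval z =
    (-1 : ℂ) ^ n * (-(1 / ((Acoef n 0 : ℝ) : ℂ)) * ∏ k ∈ range (n+1), (z - 2 * (k : ℂ)) +
      ∑ m ∈ range (n+1), (-1 : ℂ) ^ m * ((Acoef n m : ℝ) : ℂ) *
        ((z - 1) * ∏ k ∈ (range (n+1)).erase m, (z - 2 * (k : ℂ)))) := by
  simp [Qq, eval_prod, eval_finset_sum]

lemma natDegree_Pp (n : ℕ) : (Pp n).natDegree = n := by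
  rw [Pp, natDegree_prod_of_monic _ _ (fun m _ => monic_X_add_C _)]
  simp only [natDegree_X_add_C, Finset.sum_const, smul_eq_mul, mul_one, Nat.card_Icc]
  omega

lemma natDegree_Qq (n : ℕ) : (Qq n).natDegree ≤ n + 1 := by
  rw [Qq]
  apply (natDegree_C_mul_le _ _).trans
  apply (natDegree_add_le _ _).trans
  apply max_le
  · apply (natDegree_C_mul_le _ _).trans
    apply (natDegree_prod_of_monic _ _ (fun k _ => monic_X_sub_C _)).le.trans
    simp only [natDegree_X_sub_C, Finset.sum_const, smul_eq_mul, mul_one, Finset.card_range]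
    omega
  · apply (natDegree_sum_le_of_forall_le _ _ ?_)
    intro m hm
    apply (natDegree_C_mul_le _ _).trans
    apply (natDegree_mul_le).trans
    have h1 : (Polynomial.X - (1:ℂ[X])).natDegree ≤ 1 := by
      simpa using natDegree_X_sub_C_le (1:ℂ)
    have h2 : (∏ k ∈ (range (n+1)).erase m,
        (Polynomial.X - Polynomial.C (2 * (k : ℂ)))).natDegree ≤ n := by
      rw [natDegree_prod_of_monic _ _ (fun k _ => monic_X_sub_C _)]
      simp only [natDegree_X_sub_C, Finset.sum_const, smul_eq_mul, mul_one]
      rw [Finset.card_erase_of_mem hm, Finset.card_range]; omega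
    omega

/-! ### Evaluations at the interpolation points -/

lemma evalP_one (n : ℕ) : (Pp n).eval 1 = 2 ^ n * Nat.factorial n := by
  rw [evalP]
  calc ∏ m ∈ Finset.Icc 1 n, ((1:ℂ) + 2 * m - 1) = ∏ m ∈ Finset.Icc 1 n, 2 * (m : ℂ) :=
        Finset.prod_congr rfl (fun m _ => by ring)
    _ = 2 ^ n * Nat.factorial n := by
        rw [Finset.prod_mul_distrib, Finset.prod_const, Nat.card_Icc, Nat.add_sub_cancel]
        congr 1
        rw [← Nat.cast_prod]
        congr 1
        rw [← Finset.Ico_add_one_right_eq_Icc]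
        exact Finset.prod_Ico_id_eq_factorial n

lemma evalP_two (n m : ℕ) (h : m ≤ n) :
    (Pp n).eval (2 * (m : ℂ)) = 2 ^ n * ∏ j ∈ range n, ((m : ℂ) + j + 1/2) := by
  rw [evalP, ← Finset.Ico_add_one_right_eq_Icc, Finset.prod_Ico_eq_prod_range]
  have heq : n + 1 - 1 = n := by omega
  rw [heq]
  calc ∏ i ∈ range n, (2 * (m : ℂ) + 2 * ((1 + i : ℕ) : ℂ) - 1)
      = ∏ i ∈ range n, 2 * ((m : ℂ) + i + 1/2) :=
        Finset.prod_congr rfl (fun i _ => by push_cast; ring)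
    _ = 2 ^ n * ∏ j ∈ range n, ((m : ℂ) + j + 1/2) := by
        rw [Finset.prod_mul_distrib, Finset.prod_const, card_range]

lemma key_cast (n m : ℕ) :
    ((Acoef n m : ℝ) : ℂ) * ((2 * (m : ℂ) - 1) * (Nat.factorial (n - m) : ℂ)
        * (Nat.factorial m : ℂ))
      = ∏ j ∈ range n, ((m : ℂ) + j + 1/2) := by
  have h := Acoef_mul n m
  calc ((Acoef n m : ℝ) : ℂ) * ((2 * (m : ℂ) - 1) * (Nat.factorial (n - m) : ℂ)
        * (Nat.factorial m : ℂ))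
      = ((Acoef n m * ((2 * (m : ℝ) - 1) * (Nat.factorial (n - m))
          * (Nat.factorial m)) : ℝ) : ℂ) := by push_cast; ring
    _ = ((∏ j ∈ range n, ((m : ℝ) + j + 1/2) : ℝ) : ℂ) := by rw [h]
    _ = ∏ j ∈ range n, ((m : ℂ) + j + 1/2) := by push_cast; rfl

lemma evalQ_one (n : ℕ) : (Qq n).eval 1 = 2 ^ n * Nat.factorial n := by
  rw [evalQ]
  have hsum : ∑ m ∈ range (n+1), (-1 : ℂ) ^ m * ((Acoef n m : ℝ) : ℂ) *
      (((1:ℂ) - 1) * ∏ k ∈ (range (n+1)).erase m, ((1:ℂ) - 2 * (k : ℂ))) = 0 := by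
    apply Finset.sum_eq_zero; intro m _; simp
  rw [hsum, add_zero, prod_one_sub]
  set p : ℝ := ∏ j ∈ range n, ((j : ℝ) + 1/2) with hp
  have hppos : 0 < p := by
    rw [hp]; apply Finset.prod_pos; intro j _; positivity
  have hpC : ∏ j ∈ range n, ((j : ℂ) + 1/2) = ((p : ℝ) : ℂ) := by
    rw [hp]; push_cast; rfl
  have hA0 : ((Acoef n 0 : ℝ) : ℂ) = -((p : ℝ) : ℂ) / (Nat.factorial n : ℂ) := by
    rw [Acoef_zero, hp]; push_cast; ring
  have hpne : ((p : ℝ) : ℂ) ≠ 0 := by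
    simpa using ne_of_gt hppos
  have hfne : (Nat.factorial n : ℂ) ≠ 0 := Nat.cast_ne_zero.mpr (Nat.factorial_ne_zero _)
  rw [hpC, hA0]
  have hs : ((-1 : ℂ)) ^ n * ((-1 : ℂ)) ^ n = 1 := by rw [← mul_pow]; norm_num
  field_simp
  linear_combination hs

lemma evalQ_two (n m : ℕ) (h : m ≤ n) :
    (Qq n).eval (2 * (m : ℂ)) = 2 ^ n * ∏ j ∈ range n, ((m : ℂ) + j + 1/2) := by
  rw [evalQ]
  have hmem : m ∈ range (n+1) := mem_range.mpr (by omega)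
  have h1 : ∏ k ∈ range (n+1), (2 * (m : ℂ) - 2 * (k : ℂ)) = 0 :=
    Finset.prod_eq_zero hmem (by ring)
  have h2 : ∑ m' ∈ range (n+1), (-1 : ℂ) ^ m' * ((Acoef n m' : ℝ) : ℂ) *
      ((2 * (m : ℂ) - 1) * ∏ k ∈ (range (n+1)).erase m', (2 * (m : ℂ) - 2 * (k : ℂ)))
      = (-1 : ℂ) ^ m * ((Acoef n m : ℝ) : ℂ) *
        ((2 * (m : ℂ) - 1) * ∏ k ∈ (range (n+1)).erase m, (2 * (m : ℂ) - 2 * (k : ℂ))) := by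
    apply Finset.sum_eq_single_of_mem m hmem
    intro b _ hbm
    have : ∏ k ∈ (range (n+1)).erase b, (2 * (m : ℂ) - 2 * (k : ℂ)) = 0 :=
      Finset.prod_eq_zero (Finset.mem_erase.mpr ⟨hbm.symm, hmem⟩) (by ring)
    rw [this]; ring
  rw [h1, h2, mul_zero, zero_add, prod_erase_eval n m h]
  obtain ⟨k, rfl⟩ : ∃ k, n = m + k := ⟨n - m, by omega⟩
  simp only [Nat.add_sub_cancel_left]
  have key := key_cast (m + k) m
  simp only [Nat.add_sub_cancel_left] at key
  have e1 : ((-1:ℂ))^m * ((-1:ℂ))^m = 1 := by rw [← mul_pow]; norm_num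
  have e2 : ((-1:ℂ))^k * ((-1:ℂ))^k = 1 := by rw [← mul_pow]; norm_num
  have e3 : ((-1:ℂ))^(m+k) = (-1:ℂ)^m * (-1:ℂ)^k := pow_add _ _ _
  have e4 : ((2:ℂ))^(m+k) = (2:ℂ)^m * (2:ℂ)^k := pow_add _ _ _
  have e5 : ((-2:ℂ))^k = (-1:ℂ)^k * (2:ℂ)^k := by rw [neg_pow]
  rw [e3, e4, e5]
  set K : ℂ := ((Acoef (m+k) m : ℝ) : ℂ) * ((2 * (m:ℂ) - 1) * (Nat.factorial k : ℂ)
    * (Nat.factorial m : ℂ)) with hK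
  linear_combination ((2:ℂ)^m * 2^k * K * ((-1:ℂ)^k) * ((-1:ℂ)^k)) * e1
    + ((2:ℂ)^m * 2^k * K) * e2 + ((2:ℂ)^m * 2^k) * key

lemma PQ (n : ℕ) : Pp n = Qq n := by
  have hdeg : (Pp n - Qq n).natDegree < n + 2 := by
    have h0 := Polynomial.natDegree_sub_le (Pp n) (Qq n)
    have h1 := natDegree_Pp n
    have h2 := natDegree_Qq n
    omega
  set S : Finset ℂ := insert (1 : ℂ) ((range (n+1)).image (fun m : ℕ => 2 * (m : ℂ))) with hS
  have hnotmem : (1 : ℂ) ∉ (range (n+1)).image (fun m : ℕ => 2 * (m : ℂ)) := by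
    simp only [Finset.mem_image, mem_range, not_exists]
    rintro m ⟨hm, hval⟩
    have : ((2 * m : ℕ) : ℂ) = ((1 : ℕ) : ℂ) := by push_cast; rw [hval]
    have := Nat.cast_injective this
    omega
  have hinj : Set.InjOn (fun m : ℕ => 2 * (m : ℂ)) (range (n+1)) := by
    intro a _ b _ hab
    have h2 : (a : ℂ) = (b : ℂ) := mul_left_cancel₀ two_ne_zero hab
    exact_mod_cast h2
  have hcard : S.card = n + 2 := by
    rw [hS, Finset.card_insert_of_notMem hnotmem, Finset.card_image_of_injOn hinj, card_range]
  have heval : ∀ z ∈ S, (Pp n - Qq n).eval z = 0 := by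
    intro z hz
    rw [hS, Finset.mem_insert, Finset.mem_image] at hz
    rw [Polynomial.eval_sub, sub_eq_zero]
    rcases hz with rfl | ⟨m, hm, rfl⟩
    · rw [evalP_one, evalQ_one]
    · rw [evalP_two n m (by have := mem_range.mp hm; omega),
        evalQ_two n m (by have := mem_range.mp hm; omega)]
  have h0 := Polynomial.eq_zero_of_natDegree_lt_card_of_eval_eq_zero' (Pp n - Qq n) S heval
    (by omega)
  exact sub_eq_zero.mp h0

/-- For every integer `n ≥ 1` and every `x ∈ ℂ` with
`x ∉ {0, 1, 2, 4, …, 2n}`, the partial fraction decomposition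
`g_n(x)/(x(x-1)) = (-1)^n·[-(1/A_{n0})·1/(x-1) + Σ_{m=0}^n (-1)^m·A_{nm}/(x-2m)]` holds. -/
theorem stmt_3 (n : ℕ) (hn : 1 ≤ n) (x : ℂ) (hx1 : x ≠ 1)
    (hx : ∀ m : ℕ, m ≤ n → x ≠ 2 * (m : ℂ)) :
    gn n x / (x * (x - 1)) =
      (-1) ^ n * (-(1 / (Acoef n 0 : ℂ)) * (1 / (x - 1)) +
        ∑ m ∈ Finset.range (n + 1), (-1) ^ m * (Acoef n m : ℂ) / (x - 2 * (m : ℂ))) := by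
  have hd : ∀ m ∈ range (n+1), x - 2 * (m : ℂ) ≠ 0 := fun m hm =>
    sub_ne_zero.mpr (hx m (by have := mem_range.mp hm; omega))
  have hx0 : x ≠ 0 := by have := hx 0 (Nat.zero_le n); simpa using this
  have hx1' : x - 1 ≠ 0 := sub_ne_zero.mpr hx1
  have hD : ∏ k ∈ range (n+1), (x - 2 * (k : ℂ)) ≠ 0 := Finset.prod_ne_zero_iff.mpr hd
  set E : ℂ := (x - 1) * ∏ k ∈ range (n+1), (x - 2 * (k : ℂ)) with hE
  have hEne : E ≠ 0 := mul_ne_zero hx1' hD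
  have hsplit : ∏ k ∈ range (n+1), (x - 2 * (k : ℂ))
      = x * ∏ m ∈ Finset.Icc 1 n, (x - 2 * (m : ℂ)) := by
    rw [Finset.prod_range_succ']
    simp only [Nat.cast_zero, mul_zero, sub_zero]
    rw [mul_comm]
    congr 1
    rw [← Finset.Ico_add_one_right_eq_Icc, Finset.prod_Ico_eq_prod_range, Nat.add_sub_cancel]
    exact Finset.prod_congr rfl (fun i _ => by push_cast; ring)
  have hDIcc : ∏ m ∈ Finset.Icc 1 n, (x - 2 * (m : ℂ)) ≠ 0 := by
    intro h0
    rw [hsplit, h0, mul_zero] at hD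
    exact hD rfl
  have hL : gn n x / (x * (x - 1)) * E = (Pp n).eval x := by
    rw [evalP, gn, Finset.prod_div_distrib, hE, hsplit]
    field_simp
  have hR : ((-1 : ℂ) ^ n * (-(1 / (Acoef n 0 : ℂ)) * (1 / (x - 1)) +
        ∑ m ∈ Finset.range (n + 1), (-1) ^ m * (Acoef n m : ℂ) / (x - 2 * (m : ℂ)))) * E
      = (Qq n).eval x := by
    rw [evalQ]
    have hT1 : -(1 / ((Acoef n 0 : ℝ) : ℂ)) * (1 / (x - 1)) * E
        = -(1 / ((Acoef n 0 : ℝ) : ℂ)) * ∏ k ∈ range (n+1), (x - 2 * (k : ℂ)) := by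
      rw [hE]
      have hc : (x - 1) * (1 / (x - 1)) = 1 := by rw [mul_one_div, div_self hx1']
      calc -(1 / ((Acoef n 0 : ℝ) : ℂ)) * (1 / (x - 1)) *
            ((x - 1) * ∏ k ∈ range (n+1), (x - 2 * (k : ℂ)))
          = -(1 / ((Acoef n 0 : ℝ) : ℂ)) * ((x - 1) * (1 / (x - 1))) *
            ∏ k ∈ range (n+1), (x - 2 * (k : ℂ)) := by ring
        _ = -(1 / ((Acoef n 0 : ℝ) : ℂ)) * ∏ k ∈ range (n+1), (x - 2 * (k : ℂ)) := by
            rw [hc, mul_one]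
    have hT2 : (∑ m ∈ Finset.range (n + 1), (-1 : ℂ) ^ m * ((Acoef n m : ℝ) : ℂ)
          / (x - 2 * (m : ℂ))) * E
        = ∑ m ∈ range (n+1), (-1 : ℂ) ^ m * ((Acoef n m : ℝ) : ℂ) *
            ((x - 1) * ∏ k ∈ (range (n+1)).erase m, (x - 2 * (k : ℂ))) := by
      rw [Finset.sum_mul]
      refine Finset.sum_congr rfl (fun m hm => ?_)
      rw [hE, ← Finset.mul_prod_erase _ _ hm]
      have hne := hd m hm
      field_simp
    calc ((-1 : ℂ) ^ n * (-(1 / ((Acoef n 0 : ℝ) : ℂ)) * (1 / (x - 1)) +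
          ∑ m ∈ Finset.range (n + 1), (-1) ^ m * ((Acoef n m : ℝ) : ℂ) / (x - 2 * (m : ℂ)))) * E
        = (-1 : ℂ) ^ n * ((-(1 / ((Acoef n 0 : ℝ) : ℂ)) * (1 / (x - 1))) * E +
            (∑ m ∈ Finset.range (n + 1), (-1 : ℂ) ^ m * ((Acoef n m : ℝ) : ℂ)
              / (x - 2 * (m : ℂ))) * E) := by ring
      _ = _ := by rw [hT1, hT2]
  have hmain : gn n x / (x * (x - 1)) * E
      = ((-1 : ℂ) ^ n * (-(1 / (Acoef n 0 : ℂ)) * (1 / (x - 1)) +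
          ∑ m ∈ Finset.range (n + 1), (-1) ^ m * (Acoef n m : ℂ) / (x - 2 * (m : ℂ)))) * E := by
    rw [hL, hR, PQ n]
  exact mul_right_cancel₀ hEne hmain
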